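/- arXiv:1801.06915 — 2 statements merged into one kernel-verified Lean document; each statement's English description precedes it below -/
import Mathlib

section
/- Let k be an algebraically closed field of characteristic 2 and let n ≥ 2. Then the identity matrix 1 belongs to sp(2n,k), the center of sp(2n,k) is exactly k·1 (one-dimensional), and 1 belongs to the subalgebra 𝔫 = ⁅𝔪,𝔪⁆ if and only if n is even. In particular, the center of sp(2n,k) is contained in 𝔫 if and only if n is even. -/
-- Preamble shared by the symplectic-Lie-algebra statements.
open Matrix

noncomputable section

/-- The matrix of the standard symplectic form: `[[0, Iₙ], [−Iₙ, 0]]`. -/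
def spJ (k : Type*) [Field k] (n : ℕ) :
    Matrix (Fin n ⊕ Fin n) (Fin n ⊕ Fin n) k :=
  Matrix.fromBlocks 0 1 (-1) 0

/-- The symplectic Lie algebra `sp(2n,k) = {x : xᵀJ + Jx = 0}`, as a subset of the
matrix Lie algebra (with bracket `⁅x,y⁆ = x*y - y*x`). -/
def spSet (k : Type*) [Field k] (n : ℕ) :
    Set (Matrix (Fin n ⊕ Fin n) (Fin n ⊕ Fin n) k) :=
  {x | xᵀ * spJ k n + spJ k n * x = 0}

/-- The symplectic group `Sp(2n,k) = {g : gᵀJg = J}`. -/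
def SpGroup (k : Type*) [Field k] (n : ℕ) :
    Set (Matrix (Fin n ⊕ Fin n) (Fin n ⊕ Fin n) k) :=
  {g | gᵀ * spJ k n * g = spJ k n}

/-- The derived subalgebra `𝔪 = ⁅sp(2n,k), sp(2n,k)⁆`, i.e. the span of all brackets of
pairs of elements of `sp(2n,k)`. -/
def spm (k : Type*) [Field k] (n : ℕ) :
    Submodule k (Matrix (Fin n ⊕ Fin n) (Fin n ⊕ Fin n) k) :=
  Submodule.span k {m | ∃ x ∈ spSet k n, ∃ y ∈ spSet k n, m = x * y - y * x}

/-- The second derived subalgebra `𝔫 = ⁅𝔪, 𝔪⁆`. -/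
def spn (k : Type*) [Field k] (n : ℕ) :
    Submodule k (Matrix (Fin n ⊕ Fin n) (Fin n ⊕ Fin n) k) :=
  Submodule.span k {m | ∃ x ∈ spm k n, ∃ y ∈ spm k n, m = x * y - y * x}

/-- The center `{x ∈ sp(2n,k) : ⁅x,y⁆ = 0 for all y ∈ sp(2n,k)}`. -/
def spCenter (k : Type*) [Field k] (n : ℕ) :
    Set (Matrix (Fin n ⊕ Fin n) (Fin n ⊕ Fin n) k) :=
  {x ∈ spSet k n | ∀ y ∈ spSet k n, x * y - y * x = 0}

section spHelpers
variable {k : Type*} [Field k] {n : ℕ}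

lemma spSet_fromBlocks (A B C D : Matrix (Fin n) (Fin n) k) :
    fromBlocks A B C D ∈ spSet k n ↔ (Cᵀ = C ∧ Bᵀ = B ∧ D = -Aᵀ) := by
  rw [spSet, Set.mem_setOf_eq, spJ, fromBlocks_transpose, fromBlocks_multiply,
    fromBlocks_multiply, fromBlocks_add, ← fromBlocks_zero, fromBlocks_inj]
  simp only [Matrix.mul_zero, Matrix.zero_mul, Matrix.mul_one, Matrix.one_mul,
    Matrix.mul_neg, Matrix.neg_mul, zero_add, add_zero]
  constructor
  · rintro ⟨h1, h2, h3, h4⟩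
    refine ⟨?_, ?_, eq_neg_of_add_eq_zero_right h2⟩
    · exact neg_add_eq_zero.mp h1
    · exact add_neg_eq_zero.mp h4
  · rintro ⟨h1, h2, rfl⟩
    refine ⟨by rw [h1, neg_add_cancel], by rw [add_neg_cancel], ?_, by rw [h2, add_neg_cancel]⟩
    rw [transpose_neg, transpose_transpose, neg_neg, add_neg_cancel]
section charTwoHelpers

lemma M_add_self (k : Type*) [Field k] [CharP k 2] {M : Type*} [AddCommMonoid M] [Module k M]
    (a : M) : a + a = 0 := by
  have h2 : (2:k) = 0 := by exact_mod_cast CharP.cast_eq_zero k 2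
  calc a + a = (2:k) • a := (two_smul k a).symm
  _ = 0 := by rw [h2, zero_smul]

lemma M_neg_eq (k : Type*) [Field k] [CharP k 2] {M : Type*} [AddCommGroup M] [Module k M]
    (a : M) : -a = a := by
  rw [neg_eq_iff_add_eq_zero]; exact M_add_self k a

lemma M_add_eq_zero_iff (k : Type*) [Field k] [CharP k 2] {M : Type*} [AddCommGroup M]
    [Module k M] (a b : M) : a + b = 0 ↔ a = b := by
  rw [add_eq_zero_iff_eq_neg, M_neg_eq k]

lemma sum_symm_zero {k : Type*} [Field k] [CharP k 2] {n : ℕ} {F : Fin n → Fin n → k}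
    (hs : ∀ i j, F i j = F j i) (hd : ∀ i, F i i = 0) :
    ∑ i : Fin n, ∑ j : Fin n, F i j = 0 := by
  rw [← Finset.sum_product']
  apply Finset.sum_ninvolution (fun p => (p.2, p.1))
  · intro ⟨i, j⟩
    dsimp only
    rw [hs j i]
    exact M_add_self k _
  · rintro ⟨i, j⟩ hF heq
    have hji : j = i := congrArg Prod.fst heq
    exact hF (by rw [hji]; exact hd i)
  · intro a; exact Finset.mem_univ _
  · intro a; rfl

end charTwoHelpers

variable [CharP k 2]

lemma mem_spSet_iff {x : Matrix (Fin n ⊕ Fin n) (Fin n ⊕ Fin n) k} :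
    x ∈ spSet k n ↔
      (∀ i j, x (Sum.inr i) (Sum.inl j) = x (Sum.inr j) (Sum.inl i)) ∧
      (∀ i j, x (Sum.inl i) (Sum.inr j) = x (Sum.inl j) (Sum.inr i)) ∧
      (∀ i j, x (Sum.inr i) (Sum.inr j) = x (Sum.inl j) (Sum.inl i)) := by
  conv_lhs => rw [← fromBlocks_toBlocks x]
  rw [spSet_fromBlocks]
  constructor
  · rintro ⟨h1, h2, h3⟩
    refine ⟨fun i j => ?_, fun i j => ?_, fun i j => ?_⟩
    · have := congrFun (congrFun h1 j) i
      simpa [toBlocks₂₁] using this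
    · have := congrFun (congrFun h2 j) i
      simpa [toBlocks₁₂] using this
    · have := congrFun (congrFun h3 i) j
      simpa [toBlocks₂₂, toBlocks₁₁, M_neg_eq k] using this
  · rintro ⟨h1, h2, h3⟩
    refine ⟨?_, ?_, ?_⟩
    · ext i j; simpa [toBlocks₂₁] using h1 j i
    · ext i j; simpa [toBlocks₁₂] using h2 j i
    · ext i j; simpa [toBlocks₂₂, toBlocks₁₁, M_neg_eq k] using h3 i j

lemma spD_mem (A : Matrix (Fin n) (Fin n) k) : fromBlocks A 0 0 Aᵀ ∈ spSet k n :=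
  (spSet_fromBlocks A 0 0 Aᵀ).mpr ⟨transpose_zero, transpose_zero, (M_neg_eq k Aᵀ).symm⟩

lemma spU_mem (B : Matrix (Fin n) (Fin n) k) (hB : Bᵀ = B) : fromBlocks 0 B 0 0 ∈ spSet k n :=
  (spSet_fromBlocks 0 B 0 0).mpr ⟨transpose_zero, hB, by rw [transpose_zero, neg_zero]⟩

lemma spL_mem (C : Matrix (Fin n) (Fin n) k) (hC : Cᵀ = C) : fromBlocks 0 0 C 0 ∈ spSet k n :=
  (spSet_fromBlocks 0 0 C 0).mpr ⟨hC, transpose_zero, by rw [transpose_zero, neg_zero]⟩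

lemma fb_ll (i j : Fin n) (c : k) :
    fromBlocks (single i j c) 0 0 (0 : Matrix (Fin n) (Fin n) k)
      = single (Sum.inl i) (Sum.inl j) c := by
  ext a b; cases a <;> cases b <;> simp [single]

lemma stdT {m l : Type*} [DecidableEq m] [DecidableEq l] (i : m) (j : l) (c : k) :
    (single i j c)ᵀ = single j i c := by
  ext a b; simp [single, and_comm]

lemma fb_lr (i j : Fin n) (c : k) :
    fromBlocks (0 : Matrix (Fin n) (Fin n) k) (single i j c) 0 0
      = (single (Sum.inl i) (Sum.inr j) c : Matrix (Fin n ⊕ Fin n) (Fin n ⊕ Fin n) k) := by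
  ext a b; cases a <;> cases b <;> simp [single]

lemma fb_rl (i j : Fin n) (c : k) :
    fromBlocks (0 : Matrix (Fin n) (Fin n) k) 0 (single i j c) 0
      = (single (Sum.inr i) (Sum.inl j) c : Matrix (Fin n ⊕ Fin n) (Fin n ⊕ Fin n) k) := by
  ext a b; cases a <;> cases b <;> simp [single]

lemma fb_rr (i j : Fin n) (c : k) :
    fromBlocks (0 : Matrix (Fin n) (Fin n) k) 0 0 (single i j c)
      = single (Sum.inr i) (Sum.inr j) c := by
  ext a b; cases a <;> cases b <;> simp [single]

lemma sU_mem (i : Fin n) : single (Sum.inl i) (Sum.inr i) (1:k) ∈ spSet k n := by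
  rw [← fb_lr]
  exact spU_mem _ (by rw [stdT])

lemma sL_mem (i : Fin n) : single (Sum.inr i) (Sum.inl i) (1:k) ∈ spSet k n := by
  rw [← fb_rl]
  exact spL_mem _ (by rw [stdT])

lemma sD_mem (i j : Fin n) :
    single (Sum.inl i) (Sum.inl j) (1:k) + single (Sum.inr j) (Sum.inr i) 1
      ∈ spSet k n := by
  have h : single (Sum.inl i) (Sum.inl j) (1:k)
      + single (Sum.inr j) (Sum.inr i) 1
      = fromBlocks (single i j 1) 0 0 (single i j 1)ᵀ := by
    rw [stdT, ← fb_ll, ← fb_rr, fromBlocks_add]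
    simp
  rw [h]; exact spD_mem _

lemma bracket_entry (x y : Matrix (Fin n ⊕ Fin n) (Fin n ⊕ Fin n) k)
    (a b : Fin n ⊕ Fin n) :
    (x * y - y * x) a b = ∑ m : Fin n,
      (x a (Sum.inl m) * y (Sum.inl m) b + x a (Sum.inr m) * y (Sum.inr m) b
        - y a (Sum.inl m) * x (Sum.inl m) b - y a (Sum.inr m) * x (Sum.inr m) b) := by
  simp only [Matrix.sub_apply, Matrix.mul_apply, Fintype.sum_sum_type,
    Finset.sum_sub_distrib, Finset.sum_add_distrib]
  ring

def altSet (k : Type*) [Field k] (n : ℕ) :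
    Submodule k (Matrix (Fin n ⊕ Fin n) (Fin n ⊕ Fin n) k) where
  carrier := {x | (∀ i j, x (Sum.inl i) (Sum.inr j) = x (Sum.inl j) (Sum.inr i)) ∧
      (∀ i, x (Sum.inl i) (Sum.inr i) = 0) ∧
      (∀ i j, x (Sum.inr i) (Sum.inl j) = x (Sum.inr j) (Sum.inl i)) ∧
      (∀ i, x (Sum.inr i) (Sum.inl i) = 0)}
  add_mem' := by
    rintro a b ⟨ha1, ha2, ha3, ha4⟩ ⟨hb1, hb2, hb3, hb4⟩
    refine ⟨fun i j => ?_, fun i => ?_, fun i j => ?_, fun i => ?_⟩ <;>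
      simp [Matrix.add_apply, ha1 _ _, ha3 _ _, hb1 _ _, hb3 _ _, ha2 _, ha4 _, hb2 _, hb4 _]
  zero_mem' := by
    refine ⟨fun i j => ?_, fun i => ?_, fun i j => ?_, fun i => ?_⟩ <;> simp
  smul_mem' := by
    rintro c a ⟨ha1, ha2, ha3, ha4⟩
    refine ⟨fun i j => ?_, fun i => ?_, fun i j => ?_, fun i => ?_⟩ <;>
      simp [Matrix.smul_apply, ha1 _ _, ha3 _ _, ha2 _, ha4 _]

lemma bracket_mem_altSet {x y : Matrix (Fin n ⊕ Fin n) (Fin n ⊕ Fin n) k}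
    (hx : x ∈ spSet k n) (hy : y ∈ spSet k n) : x * y - y * x ∈ altSet k n := by
  obtain ⟨hx1, hx2, hx3⟩ := mem_spSet_iff.mp hx
  obtain ⟨hy1, hy2, hy3⟩ := mem_spSet_iff.mp hy
  refine ⟨fun a b => ?_, fun a => ?_, fun a b => ?_, fun a => ?_⟩
  · rw [bracket_entry, bracket_entry]
    apply Finset.sum_congr rfl
    intro m _
    rw [hy2 m b, hy3 m b, hx2 m b, hx3 m b, hy2 m a, hy3 m a, hx2 m a, hx3 m a]
    refine (M_add_eq_zero_iff k _ _).mp (by ring)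
  · rw [bracket_entry]
    apply Finset.sum_eq_zero
    intro m _
    rw [hy2 m a, hy3 m a, hx2 m a, hx3 m a]
    ring
  · rw [bracket_entry, bracket_entry]
    apply Finset.sum_congr rfl
    intro m _
    rw [hx1 a m, hx3 a m, hy1 a m, hy3 a m, hx1 b m, hx3 b m, hy1 b m, hy3 b m]
    refine (M_add_eq_zero_iff k _ _).mp (by ring)
  · rw [bracket_entry]
    apply Finset.sum_eq_zero
    intro m _
    rw [hx1 a m, hx3 a m, hy1 a m, hy3 a m]
    ring

lemma spm_le_altSet : spm k n ≤ altSet k n := by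
  rw [spm, Submodule.span_le]
  rintro z ⟨x, hx, y, hy, rfl⟩
  exact bracket_mem_altSet hx hy

def Phi (k : Type*) [Field k] (n : ℕ) :
    Matrix (Fin n ⊕ Fin n) (Fin n ⊕ Fin n) k →ₗ[k] k where
  toFun x := ∑ i : Fin n, x (Sum.inl i) (Sum.inl i)
  map_add' x y := by simp [Matrix.add_apply, Finset.sum_add_distrib]
  map_smul' c x := by simp [Matrix.smul_apply, Finset.mul_sum, smul_eq_mul]

lemma Phi_bracket_zero {u v : Matrix (Fin n ⊕ Fin n) (Fin n ⊕ Fin n) k}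
    (hu : u ∈ altSet k n) (hv : v ∈ altSet k n) : Phi k n (u * v - v * u) = 0 := by
  obtain ⟨hu1, hu2, hu3, hu4⟩ := hu
  obtain ⟨hv1, hv2, hv3, hv4⟩ := hv
  have step : Phi k n (u * v - v * u) =
      (∑ i : Fin n, ∑ m : Fin n,
        (u (Sum.inl i) (Sum.inl m) * v (Sum.inl m) (Sum.inl i)
          - v (Sum.inl i) (Sum.inl m) * u (Sum.inl m) (Sum.inl i)))
      + (∑ i : Fin n, ∑ m : Fin n,
        (u (Sum.inl i) (Sum.inr m) * v (Sum.inr m) (Sum.inl i)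
          - v (Sum.inl i) (Sum.inr m) * u (Sum.inr m) (Sum.inl i))) := by
    show (∑ i : Fin n, (u * v - v * u) (Sum.inl i) (Sum.inl i)) = _
    rw [← Finset.sum_add_distrib]
    apply Finset.sum_congr rfl
    intro i _
    rw [bracket_entry, ← Finset.sum_add_distrib]
    apply Finset.sum_congr rfl
    intro m _
    ring
  rw [step]
  have h1 : (∑ i : Fin n, ∑ m : Fin n,
      (u (Sum.inl i) (Sum.inl m) * v (Sum.inl m) (Sum.inl i)
        - v (Sum.inl i) (Sum.inl m) * u (Sum.inl m) (Sum.inl i))) = 0 := by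
    simp only [Finset.sum_sub_distrib]
    rw [sub_eq_zero]
    rw [Finset.sum_comm]
    apply Finset.sum_congr rfl
    intro i _
    apply Finset.sum_congr rfl
    intro m _
    ring
  have h2 : (∑ i : Fin n, ∑ m : Fin n,
      (u (Sum.inl i) (Sum.inr m) * v (Sum.inr m) (Sum.inl i)
        - v (Sum.inl i) (Sum.inr m) * u (Sum.inr m) (Sum.inl i))) = 0 := by
    apply sum_symm_zero
    · intro i m
      rw [hu1 i m, hv3 m i, hv1 i m, hu3 m i]
    · intro i
      rw [hu2 i, hv2 i]
      ring
  rw [h1, h2, add_zero]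

lemma spn_le_ker : spn k n ≤ LinearMap.ker (Phi k n) := by
  rw [spn, Submodule.span_le]
  rintro z ⟨u, hu, v, hv, rfl⟩
  exact Phi_bracket_zero (spm_le_altSet hu) (spm_le_altSet hv)

lemma one_mem_spSet : (1 : Matrix (Fin n ⊕ Fin n) (Fin n ⊕ Fin n) k) ∈ spSet k n := by
  rw [← fromBlocks_one, spSet_fromBlocks]
  exact ⟨transpose_zero, transpose_zero, by rw [transpose_one, M_neg_eq k]⟩

lemma smul_one_mem_spCenter (c : k) :
    c • (1 : Matrix (Fin n ⊕ Fin n) (Fin n ⊕ Fin n) k) ∈ spCenter k n := by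
  constructor
  · show (c • (1:Matrix (Fin n ⊕ Fin n) (Fin n ⊕ Fin n) k))ᵀ * spJ k n + spJ k n * (c • 1) = 0
    rw [transpose_smul, transpose_one, smul_mul_assoc, one_mul, Matrix.mul_smul, Matrix.mul_one]
    exact M_add_self k _
  · intro y _
    rw [smul_mul_assoc, one_mul, Matrix.mul_smul, Matrix.mul_one, sub_self]

lemma center_sub_scalar {x : Matrix (Fin n ⊕ Fin n) (Fin n ⊕ Fin n) k}
    (hx : x ∈ spCenter k n) : ∃ c : k, x = c • 1 := by
  obtain ⟨hxs, hc⟩ := hx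
  have hcomm : ∀ y ∈ spSet k n, Commute y x := by
    intro y hy
    have h := hc y hy
    rw [sub_eq_zero] at h
    exact (Commute.symm h)
  have hU : ∀ i : Fin n, Commute (single (Sum.inl i) (Sum.inr i) (1:k)) x :=
    fun i => hcomm _ (sU_mem i)
  have hL : ∀ i : Fin n, Commute (single (Sum.inr i) (Sum.inl i) (1:k)) x :=
    fun i => hcomm _ (sL_mem i)
  have hD : ∀ i j : Fin n, Commute (single (Sum.inl i) (Sum.inl j) (1:k)
      + single (Sum.inr j) (Sum.inr i) 1) x :=
    fun i j => hcomm _ (sD_mem i j)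
  have hdL : ∀ i : Fin n, Commute (single (Sum.inl i) (Sum.inl i) (1:k)) x := by
    intro i
    have h := (hU i).mul_left (hL i)
    rwa [Matrix.single_mul_single_same, one_mul] at h
  have hdR : ∀ i : Fin n, Commute (single (Sum.inr i) (Sum.inr i) (1:k)) x := by
    intro i
    have h := (hL i).mul_left (hU i)
    rwa [Matrix.single_mul_single_same, one_mul] at h
  have hLL : ∀ i j : Fin n, Commute (single (Sum.inl i) (Sum.inl j) (1:k)) x := by
    intro i j
    have h := (hdL i).mul_left (hD i j)
    have e1 : single (Sum.inl i) (Sum.inl i) (1:k)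
        * single (Sum.inr j) (Sum.inr i) 1 = 0 :=
      Matrix.single_mul_single_of_ne _ _ _ _ (by simp) 1
    rwa [mul_add, Matrix.single_mul_single_same, one_mul, e1, add_zero] at h
  have hRR : ∀ i j : Fin n, Commute (single (Sum.inr i) (Sum.inr j) (1:k)) x := by
    intro i j
    have h := (hdR i).mul_left (hD j i)
    have e1 : single (Sum.inr i) (Sum.inr i) (1:k)
        * single (Sum.inl j) (Sum.inl i) 1 = 0 :=
      Matrix.single_mul_single_of_ne _ _ _ _ (by simp) 1
    rwa [mul_add, e1, Matrix.single_mul_single_same, one_mul, zero_add] at h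
  have hLR : ∀ i j : Fin n, Commute (single (Sum.inl i) (Sum.inr j) (1:k)) x := by
    intro i j
    have h := (hLL i j).mul_left (hU j)
    rwa [Matrix.single_mul_single_same, one_mul] at h
  have hRL : ∀ i j : Fin n, Commute (single (Sum.inr i) (Sum.inl j) (1:k)) x := by
    intro i j
    have h := (hRR i j).mul_left (hL j)
    rwa [Matrix.single_mul_single_same, one_mul] at h
  have hall : Pairwise fun a b : Fin n ⊕ Fin n => Commute (single a b (1:k)) x := by
    intro a b _
    cases a with
    | inl i => cases b with
      | inl j => exact hLL i j
      | inr j => exact hLR i j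
    | inr i => cases b with
      | inl j => exact hRL i j
      | inr j => exact hRR i j
  obtain ⟨c, hcx⟩ := Matrix.mem_range_scalar_of_commute_single hall
  refine ⟨c, ?_⟩
  rw [← hcx]
  ext a b
  simp [Matrix.scalar_apply, Matrix.smul_apply, Matrix.one_apply, Matrix.diagonal]

lemma uEq (i j : Fin n) :
    (single (Sum.inl j) (Sum.inl i) (1:k) + single (Sum.inr i) (Sum.inr j) (1:k))
        * single (Sum.inl i) (Sum.inr i) (1:k)
      - single (Sum.inl i) (Sum.inr i) (1:k) *
        (single (Sum.inl j) (Sum.inl i) (1:k) + single (Sum.inr i) (Sum.inr j) (1:k))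
      = single (Sum.inl i) (Sum.inr j) (1:k) + single (Sum.inl j) (Sum.inr i) (1:k) := by
  have z1 : (single (Sum.inr i) (Sum.inr j) (1:k) :
        Matrix (Fin n ⊕ Fin n) (Fin n ⊕ Fin n) k)
      * single (Sum.inl i) (Sum.inr i) (1:k) = 0 :=
    by apply Matrix.single_mul_single_of_ne _ _ _ _ _; simp
  have z2 : (single (Sum.inl i) (Sum.inr i) (1:k) :
        Matrix (Fin n ⊕ Fin n) (Fin n ⊕ Fin n) k)
      * single (Sum.inl j) (Sum.inl i) (1:k) = 0 :=
    by apply Matrix.single_mul_single_of_ne _ _ _ _ _; simp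
  rw [sub_eq_add_neg, M_neg_eq k]
  simp only [add_mul, mul_add, Matrix.single_mul_single_same, one_mul, z1, z2,
    add_zero, zero_add]
  abel

lemma vEq (i j : Fin n) :
    (single (Sum.inl i) (Sum.inl j) (1:k) + single (Sum.inr j) (Sum.inr i) (1:k))
        * single (Sum.inr i) (Sum.inl i) (1:k)
      - single (Sum.inr i) (Sum.inl i) (1:k) *
        (single (Sum.inl i) (Sum.inl j) (1:k) + single (Sum.inr j) (Sum.inr i) (1:k))
      = single (Sum.inr i) (Sum.inl j) (1:k) + single (Sum.inr j) (Sum.inl i) (1:k) := by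
  have z1 : (single (Sum.inl i) (Sum.inl j) (1:k) :
        Matrix (Fin n ⊕ Fin n) (Fin n ⊕ Fin n) k)
      * single (Sum.inr i) (Sum.inl i) (1:k) = 0 :=
    by apply Matrix.single_mul_single_of_ne _ _ _ _ _; simp
  have z2 : (single (Sum.inr i) (Sum.inl i) (1:k) :
        Matrix (Fin n ⊕ Fin n) (Fin n ⊕ Fin n) k)
      * single (Sum.inr j) (Sum.inr i) (1:k) = 0 :=
    by apply Matrix.single_mul_single_of_ne _ _ _ _ _; simp
  rw [sub_eq_add_neg, M_neg_eq k]
  simp only [add_mul, mul_add, Matrix.single_mul_single_same, one_mul, z1, z2,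
    add_zero, zero_add]
  abel

lemma PEq {i j : Fin n} (hij : i ≠ j) :
    (single (Sum.inl i) (Sum.inr j) (1:k) + single (Sum.inl j) (Sum.inr i) (1:k))
        * (single (Sum.inr i) (Sum.inl j) (1:k) + single (Sum.inr j) (Sum.inl i) (1:k))
      - (single (Sum.inr i) (Sum.inl j) (1:k) + single (Sum.inr j) (Sum.inl i) (1:k))
        * (single (Sum.inl i) (Sum.inr j) (1:k) + single (Sum.inl j) (Sum.inr i) (1:k))
      = single (Sum.inl i) (Sum.inl i) (1:k) + single (Sum.inl j) (Sum.inl j) (1:k)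
        + single (Sum.inr i) (Sum.inr i) (1:k) + single (Sum.inr j) (Sum.inr j) (1:k) := by
  have hij' : j ≠ i := hij.symm
  have z1 : single (Sum.inl i) (Sum.inr j) (1:k)
      * single (Sum.inr i) (Sum.inl j) (1:k) = 0 :=
    by apply Matrix.single_mul_single_of_ne _ _ _ _ _; simp [hij']
  have z2 : single (Sum.inl j) (Sum.inr i) (1:k)
      * single (Sum.inr j) (Sum.inl i) (1:k) = 0 :=
    by apply Matrix.single_mul_single_of_ne _ _ _ _ _; simp [hij]
  have z3 : single (Sum.inr i) (Sum.inl j) (1:k)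
      * single (Sum.inl i) (Sum.inr j) (1:k) = 0 :=
    by apply Matrix.single_mul_single_of_ne _ _ _ _ _; simp [hij']
  have z4 : single (Sum.inr j) (Sum.inl i) (1:k)
      * single (Sum.inl j) (Sum.inr i) (1:k) = 0 :=
    by apply Matrix.single_mul_single_of_ne _ _ _ _ _; simp [hij]
  rw [sub_eq_add_neg, M_neg_eq k]
  simp only [add_mul, mul_add, Matrix.single_mul_single_same, one_mul, z1, z2, z3, z4,
    add_zero, zero_add]
  abel

lemma one_eq_sum_diag :
    (1 : Matrix (Fin n ⊕ Fin n) (Fin n ⊕ Fin n) k)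
      = ∑ a : Fin n ⊕ Fin n, single a a 1 := by
  ext a b
  simp only [Matrix.sum_apply, Matrix.single, Matrix.of_apply, ite_and]
  rw [Finset.sum_ite_eq']
  simp [Matrix.one_apply]

lemma P_mem_spn {i j : Fin n} (hij : i ≠ j) :
    single (Sum.inl i) (Sum.inl i) (1:k) + single (Sum.inl j) (Sum.inl j) (1:k)
      + single (Sum.inr i) (Sum.inr i) (1:k)
      + single (Sum.inr j) (Sum.inr j) (1:k) ∈ spn k n := by
  have hu : single (Sum.inl i) (Sum.inr j) (1:k)
      + single (Sum.inl j) (Sum.inr i) (1:k) ∈ spm k n := by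
    apply Submodule.subset_span
    exact ⟨_, sD_mem j i, _, sU_mem i, (uEq i j).symm⟩
  have hv : single (Sum.inr i) (Sum.inl j) (1:k)
      + single (Sum.inr j) (Sum.inl i) (1:k) ∈ spm k n := by
    apply Submodule.subset_span
    exact ⟨_, sD_mem i j, _, sL_mem i, (vEq i j).symm⟩
  apply Submodule.subset_span
  exact ⟨_, hu, _, hv, (PEq hij).symm⟩

lemma even_one_mem {m : ℕ} :
    (1 : Matrix (Fin (m + m) ⊕ Fin (m + m)) (Fin (m + m) ⊕ Fin (m + m)) k)
      ∈ spn k (m + m) := by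
  have hsum : (1 : Matrix (Fin (m + m) ⊕ Fin (m + m)) (Fin (m + m) ⊕ Fin (m + m)) k)
      = ∑ l : Fin m,
        (single (Sum.inl (Fin.castAdd m l)) (Sum.inl (Fin.castAdd m l)) (1:k)
          + single (Sum.inl (Fin.natAdd m l)) (Sum.inl (Fin.natAdd m l)) (1:k)
          + single (Sum.inr (Fin.castAdd m l)) (Sum.inr (Fin.castAdd m l)) (1:k)
          + single (Sum.inr (Fin.natAdd m l)) (Sum.inr (Fin.natAdd m l)) (1:k)) := by
    rw [one_eq_sum_diag, Fintype.sum_sum_type, Fin.sum_univ_add, Fin.sum_univ_add]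
    rw [← Finset.sum_add_distrib, ← Finset.sum_add_distrib, ← Finset.sum_add_distrib]
    apply Finset.sum_congr rfl
    intro l _
    abel
  rw [hsum]
  apply Submodule.sum_mem
  intro l _
  apply P_mem_spn
  intro h
  have := congrArg Fin.val h
  simp only [Fin.coe_castAdd, Fin.coe_natAdd] at this
  omega

end spHelpers

/-- Let `k` be algebraically closed of characteristic 2 and `n ≥ 2`. Then the identity
matrix `1` belongs to `sp(2n,k)`, the center of `sp(2n,k)` is exactly `k·1`, and
`1 ∈ 𝔫` iff `n` is even. In particular the center of `sp(2n,k)` is contained in `𝔫`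
iff `n` is even. -/
theorem stmt15 (k : Type*) [Field k] [IsAlgClosed k] [CharP k 2] (n : ℕ) (hn : 2 ≤ n) :
    (1 : Matrix (Fin n ⊕ Fin n) (Fin n ⊕ Fin n) k) ∈ spSet k n ∧
    spCenter k n =
      Set.range (fun c : k => c • (1 : Matrix (Fin n ⊕ Fin n) (Fin n ⊕ Fin n) k)) ∧
    ((1 : Matrix (Fin n ⊕ Fin n) (Fin n ⊕ Fin n) k) ∈ spn k n ↔ Even n) ∧
    (spCenter k n ⊆ (spn k n : Set (Matrix (Fin n ⊕ Fin n) (Fin n ⊕ Fin n) k)) ↔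
      Even n) := by

  have key_even : ((1 : Matrix (Fin n ⊕ Fin n) (Fin n ⊕ Fin n) k) ∈ spn k n ↔ Even n) := by
    constructor
    · intro h
      have h0 := spn_le_ker h
      rw [LinearMap.mem_ker] at h0
      have hphi : Phi k n (1 : Matrix (Fin n ⊕ Fin n) (Fin n ⊕ Fin n) k) = (n : k) := by
        show (∑ i : Fin n, (1 : Matrix (Fin n ⊕ Fin n) (Fin n ⊕ Fin n) k) (Sum.inl i) (Sum.inl i)) = (n : k)
        simp [Matrix.one_apply_eq]
      rw [hphi] at h0
      rw [even_iff_two_dvd]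
      exact (CharP.cast_eq_zero_iff k 2 n).mp h0
    · rintro ⟨m, rfl⟩
      exact even_one_mem
  have key_center : spCenter k n =
      Set.range (fun c : k => c • (1 : Matrix (Fin n ⊕ Fin n) (Fin n ⊕ Fin n) k)) := by
    ext x
    constructor
    · intro hx
      obtain ⟨c, rfl⟩ := center_sub_scalar hx
      exact ⟨c, rfl⟩
    · rintro ⟨c, rfl⟩
      exact smul_one_mem_spCenter c
  refine ⟨one_mem_spSet, key_center, key_even, ?_⟩
  constructor
  · intro hsub
    apply key_even.mp
    have h1 : (1 : Matrix (Fin n ⊕ Fin n) (Fin n ⊕ Fin n) k) ∈ spCenter k n := by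
      have := smul_one_mem_spCenter (1 : k) (n := n)
      rwa [one_smul] at this
    exact hsub h1
  · intro hev
    intro x hx
    obtain ⟨c, rfl⟩ := center_sub_scalar hx
    exact Submodule.smul_mem _ c (key_even.mpr hev)
end
end

section
/- Let k be an algebraically closed field of characteristic 2, let n ≥ 2, and let x ∈ sp(2n,k) satisfy x·x = 0 (as matrices) and rank x = 1. Then there exists g ∈ Sp(2n,k) such that the element y := x + g x g⁻¹ satisfies y·y = 0 and rank y = 2. -/
-- Preamble shared by the symplectic-Lie-algebra statements.
open Matrix

noncomputable section

section Helpers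
variable {k : Type*} [Field k] {n : ℕ}

lemma matNeg [CharP k 2] {m p : Type*} (A : Matrix m p k) : -A = A := by
  ext i j; simp [CharTwo.neg_eq]

lemma matAddSelf [CharP k 2] {m p : Type*} (A : Matrix m p k) : A + A = 0 := by
  ext i j; simp [CharTwo.add_self_eq_zero]

lemma spJ_mulVec (u : Fin n ⊕ Fin n → k) :
    spJ k n *ᵥ u = Sum.elim (u ∘ Sum.inr) (-(u ∘ Sum.inl)) := by
  unfold spJ
  have : u = Sum.elim (u ∘ Sum.inl) (u ∘ Sum.inr) := by ext (i|i) <;> rfl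
  rw [this, fromBlocks_mulVec]
  simp [neg_mulVec]

lemma spJ_alt (u : Fin n ⊕ Fin n → k) : u ⬝ᵥ (spJ k n *ᵥ u) = 0 := by
  rw [spJ_mulVec]
  simp [dotProduct, Fintype.sum_sum_type, mul_comm]

lemma dot_spJ_single_inl (v : Fin n ⊕ Fin n → k) (i : Fin n) (c : k) :
    v ⬝ᵥ (spJ k n *ᵥ Pi.single (Sum.inl i) c) = -(v (Sum.inr i) * c) := by
  rw [spJ_mulVec]
  simp [dotProduct, Fintype.sum_sum_type, Pi.single_apply, Finset.sum_ite_eq, mul_comm]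

lemma dot_spJ_single_inr (v : Fin n ⊕ Fin n → k) (i : Fin n) (c : k) :
    v ⬝ᵥ (spJ k n *ᵥ Pi.single (Sum.inr i) c) = v (Sum.inl i) * c := by
  rw [spJ_mulVec]
  simp [dotProduct, Fintype.sum_sum_type, Pi.single_apply, Finset.sum_ite_eq, mul_comm]

lemma stdB_transpose {p : Type*} [DecidableEq p] (i j : p) (c : k) :
    (Matrix.single i j c)ᵀ = Matrix.single j i c := by
  ext a b; simp [Matrix.single, and_comm]

lemma stdB_mulVec {p : Type*} [Fintype p] [DecidableEq p] (i j : p) (u : p → k) :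
    Matrix.single i j (1:k) *ᵥ u = Pi.single i (u j) := by
  ext l
  simp [Matrix.single, mulVec, dotProduct, Pi.single_apply, ite_and, Finset.sum_ite_eq, eq_comm]

lemma caseA [CharP k 2] (hn : 2 ≤ n) (v : Fin n ⊕ Fin n → k) (i0 : Fin n)
    (hb : v (Sum.inr i0) ≠ 0) :
    ∃ g : Matrix (Fin n ⊕ Fin n) (Fin n ⊕ Fin n) k,
      gᵀ * spJ k n * g = spJ k n ∧ g * g = 1 ∧
      v ⬝ᵥ (spJ k n *ᵥ (g *ᵥ v)) = 0 ∧
      ∀ α β : k, ∃ z, v ⬝ᵥ z = α ∧ (g *ᵥ v) ⬝ᵥ z = β := by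
  obtain ⟨j0, hj0⟩ := Fintype.exists_ne_of_one_lt_card (by simp; omega) i0
  set B : Matrix (Fin n) (Fin n) k := Matrix.single i0 j0 1 + Matrix.single j0 i0 1 with hB
  have hBt : Bᵀ = B := by
    rw [hB, transpose_add, stdB_transpose, stdB_transpose, add_comm]
  set g : Matrix (Fin n ⊕ Fin n) (Fin n ⊕ Fin n) k := fromBlocks 1 B 0 1 with hg
  have hgt : gᵀ = fromBlocks 1 0 B 1 := by
    rw [hg, fromBlocks_transpose, hBt]; simp
  have hg2 : g * g = 1 := by
    rw [hg, fromBlocks_multiply]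
    simp only [Matrix.one_mul, Matrix.mul_one, Matrix.mul_zero, Matrix.zero_mul,
      add_zero, zero_add, matAddSelf]
    rw [← fromBlocks_one]
  have hsymp : gᵀ * spJ k n * g = spJ k n := by
    rw [hgt, hg]
    unfold spJ
    rw [fromBlocks_multiply, fromBlocks_multiply]
    simp only [Matrix.one_mul, Matrix.mul_one, Matrix.mul_zero, Matrix.zero_mul,
      Matrix.mul_neg, Matrix.neg_mul, add_zero, zero_add, matNeg, matAddSelf]
  -- the image vector
  have hwv : g *ᵥ v = v + Pi.single (Sum.inl i0) (v (Sum.inr j0))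
      + Pi.single (Sum.inl j0) (v (Sum.inr i0)) := by
    rw [hg]
    have hv : v = Sum.elim (v ∘ Sum.inl) (v ∘ Sum.inr) := by ext (i|i) <;> rfl
    rw [show (fromBlocks 1 B 0 1 : Matrix (Fin n ⊕ Fin n) (Fin n ⊕ Fin n) k) *ᵥ v
        = fromBlocks 1 B 0 1 *ᵥ Sum.elim (v ∘ Sum.inl) (v ∘ Sum.inr) from by rw [← hv],
      fromBlocks_mulVec]
    rw [hB, add_mulVec, stdB_mulVec, stdB_mulVec]
    ext (l|l) <;> simp [Pi.single_apply, Sum.elim] <;> ring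
  refine ⟨g, hsymp, hg2, ?_, ?_⟩
  · rw [hwv]
    rw [Matrix.mulVec_add, Matrix.mulVec_add, dotProduct_add, dotProduct_add, spJ_alt,
      dot_spJ_single_inl, dot_spJ_single_inl]
    simp [CharTwo.neg_eq, mul_comm, CharTwo.add_self_eq_zero]
  · intro α β
    set t : k := (β - α) / v (Sum.inr i0) with ht
    set s : k := (α - v (Sum.inl j0) * t) / v (Sum.inr i0) with hs
    refine ⟨Pi.single (Sum.inr i0) s + Pi.single (Sum.inl j0) t, ?_, ?_⟩
    · rw [dotProduct_add, dotProduct_single, dotProduct_single, hs]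
      field_simp
      ring
    · rw [hwv]
      rw [add_dotProduct, add_dotProduct, dotProduct_add, dotProduct_single, dotProduct_single,
        single_dotProduct, single_dotProduct]
      have e1 : (Pi.single (Sum.inr i0) s + Pi.single (Sum.inl j0) t :
          Fin n ⊕ Fin n → k) (Sum.inl i0) = 0 := by
        simp [Pi.single_apply, hj0.symm]
      have e2 : (Pi.single (Sum.inr i0) s + Pi.single (Sum.inl j0) t :
          Fin n ⊕ Fin n → k) (Sum.inl j0) = t := by
        simp [Pi.single_apply]
      rw [e1, e2, mul_zero, add_zero]
      have hval : v (Sum.inr i0) * s + v (Sum.inl j0) * t = α := by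
        rw [hs]; field_simp; ring
      rw [hval, ht]
      field_simp
      ring

lemma caseB [CharP k 2] (hn : 2 ≤ n) (v : Fin n ⊕ Fin n → k) (i0 : Fin n)
    (ha : v (Sum.inl i0) ≠ 0) (hvr : ∀ i, v (Sum.inr i) = 0) :
    ∃ g : Matrix (Fin n ⊕ Fin n) (Fin n ⊕ Fin n) k,
      gᵀ * spJ k n * g = spJ k n ∧ g * g = 1 ∧
      v ⬝ᵥ (spJ k n *ᵥ (g *ᵥ v)) = 0 ∧
      ∀ α β : k, ∃ z, v ⬝ᵥ z = α ∧ (g *ᵥ v) ⬝ᵥ z = β := by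
  obtain ⟨j0, hj0⟩ := Fintype.exists_ne_of_one_lt_card (by simp; omega) i0
  set B : Matrix (Fin n) (Fin n) k := Matrix.single i0 j0 1 + Matrix.single j0 i0 1 with hB
  have hBt : Bᵀ = B := by
    rw [hB, transpose_add, stdB_transpose, stdB_transpose, add_comm]
  set g : Matrix (Fin n ⊕ Fin n) (Fin n ⊕ Fin n) k := fromBlocks 1 0 B 1 with hg
  have hgt : gᵀ = fromBlocks 1 B 0 1 := by
    rw [hg, fromBlocks_transpose, hBt]; simp
  have hg2 : g * g = 1 := by
    rw [hg, fromBlocks_multiply]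
    simp only [Matrix.one_mul, Matrix.mul_one, Matrix.mul_zero, Matrix.zero_mul,
      add_zero, zero_add, matAddSelf]
    rw [← fromBlocks_one]
  have hsymp : gᵀ * spJ k n * g = spJ k n := by
    rw [hgt, hg]
    unfold spJ
    rw [fromBlocks_multiply, fromBlocks_multiply]
    simp only [Matrix.one_mul, Matrix.mul_one, Matrix.mul_zero, Matrix.zero_mul,
      Matrix.mul_neg, Matrix.neg_mul, add_zero, zero_add, matNeg, matAddSelf]
  have hwv : g *ᵥ v = v + Pi.single (Sum.inr i0) (v (Sum.inl j0))
      + Pi.single (Sum.inr j0) (v (Sum.inl i0)) := by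
    rw [hg]
    have hv : v = Sum.elim (v ∘ Sum.inl) (v ∘ Sum.inr) := by ext (i|i) <;> rfl
    rw [show (fromBlocks 1 0 B 1 : Matrix (Fin n ⊕ Fin n) (Fin n ⊕ Fin n) k) *ᵥ v
        = fromBlocks 1 0 B 1 *ᵥ Sum.elim (v ∘ Sum.inl) (v ∘ Sum.inr) from by rw [← hv],
      fromBlocks_mulVec]
    rw [hB, add_mulVec, stdB_mulVec, stdB_mulVec]
    ext (l|l) <;> simp [Pi.single_apply, Sum.elim] <;> ring
  refine ⟨g, hsymp, hg2, ?_, ?_⟩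
  · rw [hwv]
    rw [Matrix.mulVec_add, Matrix.mulVec_add, dotProduct_add, dotProduct_add, spJ_alt,
      dot_spJ_single_inr, dot_spJ_single_inr]
    simp [mul_comm, CharTwo.add_self_eq_zero]
  · intro α β
    set s : k := α / v (Sum.inl i0) with hs
    set t : k := (β - α) / v (Sum.inl i0) with ht
    refine ⟨Pi.single (Sum.inl i0) s + Pi.single (Sum.inr j0) t, ?_, ?_⟩
    · rw [dotProduct_add, dotProduct_single, dotProduct_single, hvr j0, hs]
      field_simp
      ring
    · rw [hwv]
      rw [add_dotProduct, add_dotProduct, dotProduct_add, dotProduct_single, dotProduct_single,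
        single_dotProduct, single_dotProduct]
      have e1 : (Pi.single (Sum.inl i0) s + Pi.single (Sum.inr j0) t :
          Fin n ⊕ Fin n → k) (Sum.inr i0) = 0 := by
        simp [Pi.single_apply, hj0.symm]
      have e2 : (Pi.single (Sum.inl i0) s + Pi.single (Sum.inr j0) t :
          Fin n ⊕ Fin n → k) (Sum.inr j0) = t := by
        simp [Pi.single_apply]
      rw [e1, e2, mul_zero, add_zero, hvr j0, hs, ht]
      field_simp
      ring

lemma mul_vecMulVec' {m p q : Type*} [Fintype p] (A : Matrix m p k) (b : p → k) (c : q → k) :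
    A * vecMulVec b c = vecMulVec (A *ᵥ b) c := by
  ext i j
  simp [mul_apply, vecMulVec_apply, mulVec, dotProduct, Finset.sum_mul, mul_assoc]

lemma vecMulVec_mul' {m p q : Type*} [Fintype p] (a : m → k) (b : p → k) (A : Matrix p q k) :
    vecMulVec a b * A = vecMulVec a (b ᵥ* A) := by
  ext i j
  simp [mul_apply, vecMulVec_apply, vecMul, dotProduct, Finset.mul_sum, mul_assoc]

lemma vecMulVec_mul_vecMulVec' {m p q : Type*} [Fintype p] (a : m → k) (b c : p → k) (d : q → k) :
    vecMulVec a b * vecMulVec c d = (b ⬝ᵥ c) • vecMulVec a d := by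
  ext i j
  simp [mul_apply, vecMulVec_apply, dotProduct, Finset.sum_mul, Finset.mul_sum]
  congr 1; ext l; ring

lemma vecMulVec_mulVec' {m p : Type*} [Fintype p] (a : m → k) (b z : p → k) :
    vecMulVec a b *ᵥ z = (b ⬝ᵥ z) • a := by
  ext i
  simp [vecMulVec_apply, mulVec, dotProduct, Finset.mul_sum, Finset.sum_mul, mul_assoc, mul_comm, mul_left_comm]

lemma spJ_transpose [CharP k 2] : (spJ k n)ᵀ = spJ k n := by
  ext (i|i) (j|j) <;> simp [spJ, transpose_apply, fromBlocks, one_apply, CharTwo.neg_eq, eq_comm]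

lemma spJ_mul_spJ [CharP k 2] : spJ k n * spJ k n = 1 := by
  unfold spJ
  rw [fromBlocks_multiply]
  have h : (-1 : Matrix (Fin n) (Fin n) k) = 1 := matNeg 1
  simp only [Matrix.mul_zero, Matrix.zero_mul, Matrix.mul_one, Matrix.one_mul, add_zero, zero_add,
    mul_neg_one, h]
  simp [← fromBlocks_one]

lemma key [CharP k 2] (v : Fin n ⊕ Fin n → k)
    (g : Matrix (Fin n ⊕ Fin n) (Fin n ⊕ Fin n) k)
    (hg : gᵀ * spJ k n * g = spJ k n) (hg2 : g * g = 1)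
    (hc : v ⬝ᵥ (spJ k n *ᵥ (g *ᵥ v)) = 0)
    (hz : ∀ α β : k, ∃ z, v ⬝ᵥ z = α ∧ (g *ᵥ v) ⬝ᵥ z = β)
    (x : Matrix (Fin n ⊕ Fin n) (Fin n ⊕ Fin n) k)
    (hxv : x = vecMulVec v v * spJ k n) (hrank : x.rank = 1) :
    (x + g * x * g⁻¹) * (x + g * x * g⁻¹) = 0 ∧ (x + g * x * g⁻¹).rank = 2 := by
  set J := spJ k n with hJ
  set w := g *ᵥ v with hw
  have hinv : g⁻¹ = g := inv_eq_right_inv hg2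
  have hJg : J * g = gᵀ * J := by
    have h1 : gᵀ * J * g * g = J * g := by rw [hg]
    rw [mul_assoc, hg2, mul_one] at h1
    exact h1.symm
  -- conjugate is w wᵀ J
  have hgx : g * x * g⁻¹ = vecMulVec w w * J := by
    rw [hinv, hxv]
    calc g * (vecMulVec v v * J) * g = (g * vecMulVec v v) * (J * g) := by
          rw [mul_assoc, mul_assoc, mul_assoc]
      _ = vecMulVec w v * (gᵀ * J) := by rw [mul_vecMulVec', hJg, hw]
      _ = (vecMulVec w v * gᵀ) * J := by rw [mul_assoc]
      _ = vecMulVec w (v ᵥ* gᵀ) * J := by rw [vecMulVec_mul']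
      _ = vecMulVec w w * J := by rw [vecMul_transpose, hw]
  have c1 : v ⬝ᵥ (J *ᵥ v) = 0 := spJ_alt v
  have c2 : w ⬝ᵥ (J *ᵥ w) = 0 := spJ_alt w
  have c3 : v ⬝ᵥ (J *ᵥ w) = 0 := hc
  have c4 : w ⬝ᵥ (J *ᵥ v) = 0 := by
    rw [dotProduct_mulVec w J v, hJ, ← spJ_transpose, vecMul_transpose, dotProduct_comm]
    exact hc
  -- the square is zero
  have hterm : ∀ a b : Fin n ⊕ Fin n → k, a ⬝ᵥ (J *ᵥ b) = 0 →
      (vecMulVec a a * J) * (vecMulVec b b * J) = 0 := by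
    intro a b hab
    calc (vecMulVec a a * J) * (vecMulVec b b * J)
        = vecMulVec a a * (J * vecMulVec b b) * J := by
          rw [mul_assoc, mul_assoc, mul_assoc]
      _ = vecMulVec a a * vecMulVec (J *ᵥ b) b * J := by rw [mul_vecMulVec']
      _ = ((a ⬝ᵥ (J *ᵥ b)) • vecMulVec a b) * J := by rw [vecMulVec_mul_vecMulVec']
      _ = 0 := by rw [hab, zero_smul, Matrix.zero_mul]
  have hy : x + g * x * g⁻¹ = vecMulVec v v * J + vecMulVec w w * J := by
    rw [hgx, hxv]
  have hsq : (x + g * x * g⁻¹) * (x + g * x * g⁻¹) = 0 := by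
    rw [hy, add_mul, mul_add, mul_add, hterm v v c1, hterm v w c3, hterm w v c4,
      hterm w w c2]
    simp
  refine ⟨hsq, ?_⟩
  -- rank computation
  have hJJ : J * J = 1 := spJ_mul_spJ
  have hmem : ∀ u : Fin n ⊕ Fin n → k, (x + g * x * g⁻¹) *ᵥ (J *ᵥ u) =
      (v ⬝ᵥ u) • v + (w ⬝ᵥ u) • w := by
    intro u
    have h0 : J *ᵥ (J *ᵥ u) = u := by rw [Matrix.mulVec_mulVec, hJJ, Matrix.one_mulVec]
    rw [hy, Matrix.add_mulVec, ← Matrix.mulVec_mulVec, ← Matrix.mulVec_mulVec, h0,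
      vecMulVec_mulVec', vecMulVec_mulVec']
  obtain ⟨z1, hz11, hz12⟩ := hz 1 0
  obtain ⟨z2, hz21, hz22⟩ := hz 0 1
  have hvmem : v ∈ LinearMap.range (x + g * x * g⁻¹).mulVecLin := by
    refine ⟨J *ᵥ z1, ?_⟩
    rw [mulVecLin_apply, hmem z1, hz11, hz12]
    simp
  have hwmem : w ∈ LinearMap.range (x + g * x * g⁻¹).mulVecLin := by
    refine ⟨J *ᵥ z2, ?_⟩
    rw [mulVecLin_apply, hmem z2, hz21, hz22]
    simp
  have li : LinearIndependent k ![v, w] := by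
    rw [LinearIndependent.pair_iff]
    intro s t hst
    constructor
    · have := congrArg (fun u => u ⬝ᵥ z1) hst
      simpa [add_dotProduct, smul_dotProduct, hz11, hz12] using this
    · have := congrArg (fun u => u ⬝ᵥ z2) hst
      simpa [add_dotProduct, smul_dotProduct, hz21, hz22] using this
  have hle : 2 ≤ (x + g * x * g⁻¹).rank := by
    have hspan : Submodule.span k (Set.range ![v, w]) ≤
        LinearMap.range (x + g * x * g⁻¹).mulVecLin := by
      rw [Submodule.span_le]
      rintro u ⟨i, rfl⟩
      fin_cases i
      · exact hvmem
      · exact hwmem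
    have h2 : Module.finrank k (Submodule.span k (Set.range ![v, w])) = 2 := by
      rw [finrank_span_eq_card li]
      simp
    calc (2:ℕ) = Module.finrank k (Submodule.span k (Set.range ![v, w])) := h2.symm
      _ ≤ Module.finrank k (LinearMap.range (x + g * x * g⁻¹).mulVecLin) :=
          Submodule.finrank_mono hspan
      _ = (x + g * x * g⁻¹).rank := rfl
  have hge : (x + g * x * g⁻¹).rank ≤ 2 := by
    have hr1 : (g * x * g⁻¹).rank ≤ 1 := by
      calc (g * x * g⁻¹).rank ≤ (g * x).rank := Matrix.rank_mul_le_left _ _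
        _ ≤ x.rank := Matrix.rank_mul_le_right _ _
        _ = 1 := hrank
    have hadd : (x + g * x * g⁻¹).rank ≤ x.rank + (g * x * g⁻¹).rank := by
      have hr : LinearMap.range (x + g * x * g⁻¹).mulVecLin ≤
          LinearMap.range x.mulVecLin ⊔ LinearMap.range (g * x * g⁻¹).mulVecLin := by
        rw [Matrix.mulVecLin_add]
        rintro u ⟨z, rfl⟩
        exact Submodule.add_mem_sup ⟨z, rfl⟩ ⟨z, rfl⟩
      calc (x + g * x * g⁻¹).rank
          ≤ Module.finrank k ↥(LinearMap.range x.mulVecLin ⊔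
              LinearMap.range (g * x * g⁻¹).mulVecLin) := Submodule.finrank_mono hr
        _ ≤ x.rank + (g * x * g⁻¹).rank :=
            Submodule.finrank_add_le_finrank_add_finrank
              (LinearMap.range x.mulVecLin) (LinearMap.range (g * x * g⁻¹).mulVecLin)
    omega
  omega

lemma vecMulVec_smul_right {m q : Type*} (a : m → k) (c : k) (u : q → k) :
    vecMulVec a (c • u) = c • vecMulVec a u := by
  ext i j; simp [vecMulVec_apply]; ring

lemma vecMulVec_smul_smul {m q : Type*} (a : m → k) (b : q → k) (c d : k) :
    vecMulVec (c • a) (d • b) = (c * d) • vecMulVec a b := by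
  ext i j; simp [vecMulVec_apply]; ring

lemma rank_one_decomp {m p : Type*} [Fintype m] [Fintype p] [DecidableEq p]
    (x : Matrix m p k) (h : x.rank = 1) : ∃ a b, x = vecMulVec a b := by
  have h1 : Module.finrank k ↥(LinearMap.range x.mulVecLin) = 1 := h
  obtain ⟨va, ha0, hall⟩ := finrank_eq_one_iff'.mp h1
  choose c hc using fun j : p => hall ⟨x *ᵥ Pi.single j 1, ⟨Pi.single j 1, rfl⟩⟩
  refine ⟨va.1, c, ?_⟩
  ext i j
  have h2 : c j • (va : m → k) = x *ᵥ Pi.single j 1 := congrArg Subtype.val (hc j)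
  have h3 := congrFun h2 i
  simp only [Pi.smul_apply, smul_eq_mul, mulVec_single, mul_one] at h3
  rw [vecMulVec_apply, mul_comm]
  simpa using h3.symm

lemma extract_v [IsAlgClosed k] [CharP k 2]
    (x : Matrix (Fin n ⊕ Fin n) (Fin n ⊕ Fin n) k)
    (hx : x ∈ spSet k n) (hrank : x.rank = 1) :
    ∃ v : Fin n ⊕ Fin n → k, v ≠ 0 ∧ x = vecMulVec v v * spJ k n := by
  obtain ⟨a, b, hab⟩ := rank_one_decomp x hrank
  have hx0 : x ≠ 0 := by
    intro h
    rw [h, Matrix.rank_zero] at hrank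
    exact absurd hrank (by norm_num)
  have ha : a ≠ 0 := by
    rintro rfl
    apply hx0
    rw [hab]; ext i j; simp [vecMulVec_apply]
  have hb : b ≠ 0 := by
    rintro rfl
    apply hx0
    rw [hab]; ext i j; simp [vecMulVec_apply]
  -- symplectic condition
  have hsp : xᵀ * spJ k n = spJ k n * x := by
    have h0 : xᵀ * spJ k n + spJ k n * x = 0 := hx
    have := eq_neg_of_add_eq_zero_left h0
    rwa [matNeg] at this
  set p : Fin n ⊕ Fin n → k := spJ k n *ᵥ a with hp
  have htr : (vecMulVec a b)ᵀ = vecMulVec b a := by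
    ext i j; simp [vecMulVec_apply, mul_comm]
  have hvm : a ᵥ* spJ k n = p := by
    rw [← spJ_transpose, vecMul_transpose]
  have hsp2 : vecMulVec b p = vecMulVec p b := by
    rw [hab, htr, vecMulVec_mul', hvm, mul_vecMulVec', ← hp] at hsp
    exact hsp
  have hent : ∀ i j, b i * p j = p i * b j := by
    intro i j
    have h4 := congrFun (congrFun hsp2 i) j
    rwa [vecMulVec_apply, vecMulVec_apply] at h4
  obtain ⟨i1, hi1⟩ : ∃ i, b i ≠ 0 := Function.ne_iff.mp hb
  have hpne : p ≠ 0 := by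
    intro h0
    apply ha
    have : spJ k n *ᵥ (spJ k n *ᵥ a) = spJ k n *ᵥ (0 : Fin n ⊕ Fin n → k) := by
      rw [← hp, h0]
    rw [Matrix.mulVec_mulVec, spJ_mul_spJ, Matrix.one_mulVec, Matrix.mulVec_zero] at this
    exact this
  set lam : k := p i1 / b i1 with hlam
  have hpb : p = lam • b := by
    ext j
    have := hent i1 j
    rw [Pi.smul_apply, smul_eq_mul, hlam]
    field_simp
    linear_combination this
  have hlam0 : lam ≠ 0 := by
    intro h0
    apply hpne
    rw [hpb, h0, zero_smul]
  obtain ⟨mu, hmu⟩ := IsAlgClosed.exists_pow_nat_eq (k := k) lam⁻¹ (n := 2) (by norm_num)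
  have hmu0 : mu ≠ 0 := by
    intro h0
    rw [h0] at hmu
    exact (inv_ne_zero hlam0) (by simpa using hmu.symm)
  refine ⟨mu • a, fun h0 => ha (by simpa [hmu0] using h0), ?_⟩
  have hbp : b = lam⁻¹ • p := by
    rw [hpb, smul_smul, inv_mul_cancel₀ hlam0, one_smul]
  calc x = vecMulVec a b := hab
    _ = vecMulVec a (lam⁻¹ • p) := by rw [← hbp]
    _ = lam⁻¹ • vecMulVec a p := vecMulVec_smul_right a _ p
    _ = (mu * mu) • vecMulVec a p := by rw [← hmu]; ring_nf
    _ = vecMulVec (mu • a) (mu • p) := (vecMulVec_smul_smul a p mu mu).symm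
    _ = vecMulVec (mu • a) (spJ k n *ᵥ (mu • a)) := by rw [Matrix.mulVec_smul, hp]
    _ = vecMulVec (mu • a) ((mu • a) ᵥ* spJ k n) := by
        rw [← spJ_transpose, vecMul_transpose, spJ_transpose]
    _ = vecMulVec (mu • a) (mu • a) * spJ k n := (vecMulVec_mul' _ _ _).symm

end Helpers

/-- Let `k` be algebraically closed of characteristic 2, `n ≥ 2`, and let
`x ∈ sp(2n,k)` satisfy `x·x = 0` and `rank x = 1`. Then there is `g ∈ Sp(2n,k)` such
that `y := x + g x g⁻¹` satisfies `y·y = 0` and `rank y = 2`. -/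
theorem stmt16 (k : Type*) [Field k] [IsAlgClosed k] [CharP k 2] (n : ℕ) (hn : 2 ≤ n)
    (x : Matrix (Fin n ⊕ Fin n) (Fin n ⊕ Fin n) k)
    (hx : x ∈ spSet k n) (hx2 : x * x = 0) (hrank : x.rank = 1) :
    ∃ g ∈ SpGroup k n,
      (x + g * x * g⁻¹) * (x + g * x * g⁻¹) = 0 ∧ (x + g * x * g⁻¹).rank = 2 := by
  obtain ⟨v, hv0, hxv⟩ := extract_v x hx hrank
  obtain ⟨g, hsymp, hg2, hc, hz⟩ :
      ∃ g : Matrix (Fin n ⊕ Fin n) (Fin n ⊕ Fin n) k,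
        gᵀ * spJ k n * g = spJ k n ∧ g * g = 1 ∧
        v ⬝ᵥ (spJ k n *ᵥ (g *ᵥ v)) = 0 ∧
        ∀ α β : k, ∃ z, v ⬝ᵥ z = α ∧ (g *ᵥ v) ⬝ᵥ z = β := by
    by_cases hcase : ∃ i, v (Sum.inr i) ≠ 0
    · obtain ⟨i0, hi0⟩ := hcase
      exact caseA hn v i0 hi0
    · push_neg at hcase
      obtain ⟨i0, hi0⟩ : ∃ i, v (Sum.inl i) ≠ 0 := by
        by_contra h
        push_neg at h
        apply hv0
        ext (i|i)
        · exact h i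
        · exact hcase i
      exact caseB hn v i0 hi0 hcase
  obtain ⟨hsq, hrk⟩ := key v g hsymp hg2 hc hz x hxv hrank
  exact ⟨g, hsymp, hsq, hrk⟩
end
end
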